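/- Hessian bounds at the maximum point (Lemma 2.11). Fix n ≥ 2, constants C_E ≥ 1 and C_S > 0, positive numbers r₀, r₁ with r₁ ≤ r₀ and 3r₀ ≤ 1, a point x₁ ∈ ℝⁿ with ‖x₁‖ = 2r₀, α > 0, δ > 0, and set w(x) := ‖x‖^{−α}. Let x_* be a point of the open ball B(x₁, r₁) and let φ₀, φ₁ be C² functions defined on a neighborhood of x_* such that: (a) f := (φ₁ − φ₀) + δ·w has a local maximum at x_*; (b) D²φ₁(x_*) ≥ −C_S·I; (c) there is an n×n symmetric matrix A with (1/C_E)·I ≤ A ≤ C_E·I and trace(A · D²φ₀(x_*)) ≤ 2C_E. Then |D²φ₀|(x_*) + |D²φ₁|(x_*) ≤ 2( C_E²((n−1)(C_S + δαr₀^{−(α+2)}) + 2) + δαr₀^{−(α+2)} ). -/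

import Mathlib

open scoped BigOperators

set_option maxHeartbeats 1000000

noncomputable section

abbrev Euc (n : ℕ) := EuclideanSpace ℝ (Fin n)

/-- Second partial derivative `D_{ij}u`. -/
def pd2 (n : ℕ) (i j : Fin n) (u : Euc n → ℝ) (x : Euc n) : ℝ :=
  fderiv ℝ (fun y => fderiv ℝ u y (EuclideanSpace.single j 1)) x (EuclideanSpace.single i 1)

/-- Hessian matrix `D²u`. -/
def hessM (n : ℕ) (u : Euc n → ℝ) (x : Euc n) : Matrix (Fin n) (Fin n) ℝ :=
  Matrix.of fun i j => pd2 n i j u x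

/-- `|D²u|(x) = max_{i,j} |D_{ij}u(x)|`. -/
def hessMax (n : ℕ) (u : Euc n → ℝ) (x : Euc n) : ℝ :=
  ⨆ i : Fin n, ⨆ j : Fin n, |pd2 n i j u x|


open Filter Topology Matrix

section Aux

lemma deriv2_nonpos_of_isLocalMax {g : ℝ → ℝ}
    (hc : ∀ᶠ t in 𝓝 (0:ℝ), ContinuousAt g t)
    (hd : DifferentiableAt ℝ (deriv g) 0)
    (hmax : IsLocalMax g 0) : deriv (deriv g) 0 ≤ 0 := by
  by_contra hL
  push_neg at hL
  set L := deriv (deriv g) 0 with hLdef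
  have hg'0 : deriv g 0 = 0 := hmax.deriv_eq_zero
  have hder : HasDerivAt (deriv g) L 0 := hd.hasDerivAt
  have hslope := hasDerivAt_iff_tendsto_slope.mp hder
  -- on 𝓝[>] 0, slope (deriv g) 0 t = deriv g t / t → L > 0
  have hslope' : Tendsto (slope (deriv g) 0) (𝓝[>] (0:ℝ)) (𝓝 L) :=
    hslope.mono_left (nhdsWithin_mono _ (fun t ht => by simpa using ne_of_gt ht))
  have hpos : ∀ᶠ t in 𝓝[>] (0:ℝ), 0 < deriv g t := by
    filter_upwards [hslope'.eventually (eventually_gt_nhds hL), self_mem_nhdsWithin] with t ht ht0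
    have : slope (deriv g) 0 t = deriv g t / t := by
      simp [slope, hg'0, vsub_eq_sub, div_eq_inv_mul]
    rw [this] at ht
    have := mul_pos ht ht0
    rwa [div_mul_cancel₀] at this
    exact ne_of_gt ht0
  have hmax' : ∀ᶠ t in 𝓝[>] (0:ℝ), g t ≤ g 0 := hmax.filter_mono nhdsWithin_le_nhds
  have hcont' : ∀ᶠ t in 𝓝[>] (0:ℝ), ContinuousAt g t := hc.filter_mono nhdsWithin_le_nhds
  obtain ⟨ε, hε, hsub⟩ := (nhdsGT_basis_of_exists_gt ⟨1, by norm_num⟩).eventually_iff.mp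
    (hpos.and (hmax'.and hcont'))
  -- strict mono on [0, ε/2]
  have hε2 : (0:ℝ) < ε/2 := by linarith
  have hmono : StrictMonoOn g (Set.Icc 0 (ε/2)) := by
    apply strictMonoOn_of_deriv_pos (convex_Icc _ _)
    · intro t ht
      rcases eq_or_lt_of_le ht.1 with h0 | h0
      · subst h0; exact (hc.self_of_nhds).continuousWithinAt
      · exact ((hsub ⟨h0, lt_of_le_of_lt ht.2 (by linarith)⟩).2.2).continuousWithinAt
    · intro t ht
      rw [interior_Icc] at ht
      exact (hsub ⟨ht.1, by linarith [ht.2]⟩).1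
  have h1 : g 0 < g (ε/2) := hmono ⟨le_refl _, by linarith⟩ ⟨by linarith, le_refl _⟩ hε2
  have h2 : g (ε/2) ≤ g 0 := (hsub ⟨hε2, by linarith⟩).2.1
  linarith




lemma diffAt_fderiv {n : ℕ} {u : Euc n → ℝ} {x : Euc n} (hu : ContDiffAt ℝ 2 u x) :
    DifferentiableAt ℝ (fderiv ℝ u) x := by
  have h1 : ContDiffAt ℝ 1 (fderiv ℝ u) x := hu.fderiv_right (by norm_num)
  exact h1.differentiableAt (by norm_num)

lemma pd2_eq_fderiv2 {n : ℕ} {u : Euc n → ℝ} {x : Euc n} (hu : ContDiffAt ℝ 2 u x) (i j : Fin n) :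
    pd2 n i j u x
      = fderiv ℝ (fderiv ℝ u) x (EuclideanSpace.single i 1) (EuclideanSpace.single j 1) := by
  have hd := diffAt_fderiv hu
  rw [pd2, fderiv_clm_apply hd (differentiableAt_const _)]
  simp

def vecE {n : ℕ} (v : Fin n → ℝ) : Euc n := ∑ i, v i • EuclideanSpace.single i 1

lemma fderiv2_vecE {n : ℕ} (B : Euc n →L[ℝ] Euc n →L[ℝ] ℝ) (v : Fin n → ℝ) :
    B (vecE v) (vecE v)
      = ∑ i, ∑ j, v i * v j * B (EuclideanSpace.single i 1) (EuclideanSpace.single j 1) := by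
  have h1 : B (vecE v) = ∑ i, v i • B (EuclideanSpace.single i 1) := by
    rw [vecE, map_sum]; exact Finset.sum_congr rfl fun i _ => _root_.map_smul B _ _
  rw [h1, ContinuousLinearMap.sum_apply]
  refine Finset.sum_congr rfl fun i _ => ?_
  rw [ContinuousLinearMap.smul_apply, vecE, map_sum, Finset.smul_sum]
  refine Finset.sum_congr rfl fun j _ => ?_
  rw [_root_.map_smul]
  simp [smul_eq_mul]; ring

lemma fderiv2_nonpos_of_isLocalMax {n : ℕ} {u : Euc n → ℝ} {x : Euc n}
    (hu : ContDiffAt ℝ 2 u x) (hmax : IsLocalMax u x) (y : Euc n) :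
    fderiv ℝ (fderiv ℝ u) x y y ≤ 0 := by
  set ℓ : ℝ → Euc n := fun t => x + t • y with hℓdef
  have hℓd : ∀ t : ℝ, HasDerivAt ℓ y t := by
    intro t
    simpa [hℓdef] using ((hasDerivAt_id t).smul_const y).const_add x
  have hℓ0 : ℓ 0 = x := by simp [hℓdef]
  have hℓt : Tendsto ℓ (𝓝 0) (𝓝 x) := by
    have := (hℓd 0).continuousAt.tendsto
    rwa [hℓ0] at this
  have hev : ∀ᶠ t in 𝓝 (0:ℝ), ContDiffAt ℝ 2 u (ℓ t) :=
    hℓt.eventually (hu.eventually (by norm_num))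
  set g : ℝ → ℝ := fun t => u (ℓ t) with hgdef
  have hgmax : IsLocalMax g 0 := by
    have := hℓt.eventually hmax
    filter_upwards [this] with t ht
    simpa [hgdef, hℓ0] using ht
  have hgc : ∀ᶠ t in 𝓝 (0:ℝ), ContinuousAt g t := by
    filter_upwards [hev] with t ht
    exact ht.continuousAt.comp (hℓd t).continuousAt
  -- deriv g eventually equals t ↦ fderiv u (ℓ t) y
  have hgd : ∀ᶠ t in 𝓝 (0:ℝ), HasDerivAt g (fderiv ℝ u (ℓ t) y) t := by
    filter_upwards [hev] with t ht
    have hf : HasFDerivAt u (fderiv ℝ u (ℓ t)) (ℓ t) :=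
      (ht.differentiableAt (by norm_num)).hasFDerivAt
    exact hf.comp_hasDerivAt t (hℓd t)
  have hderiv_eq : deriv g =ᶠ[𝓝 (0:ℝ)] fun t => fderiv ℝ u (ℓ t) y := by
    filter_upwards [hgd] with t ht
    exact ht.deriv
  -- second derivative
  have hB : HasFDerivAt (fderiv ℝ u) (fderiv ℝ (fderiv ℝ u) x) x :=
    ((hu.fderiv_right (m := 1) (by norm_num)).differentiableAt (by norm_num)).hasFDerivAt
  have h2 : HasDerivAt (fun t => fderiv ℝ u (ℓ t) y) (fderiv ℝ (fderiv ℝ u) x y y) 0 := by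
    have hcomp : HasDerivAt (fun t => fderiv ℝ u (ℓ t)) (fderiv ℝ (fderiv ℝ u) x y) 0 := by
      have hB' : HasFDerivAt (fderiv ℝ u) (fderiv ℝ (fderiv ℝ u) x) (ℓ 0) := by
        rw [hℓ0]; exact hB
      exact hB'.comp_hasDerivAt 0 (hℓd 0)
    exact ((ContinuousLinearMap.apply ℝ ℝ y).hasFDerivAt.comp_hasDerivAt 0 hcomp)
  have hd2 : DifferentiableAt ℝ (deriv g) 0 := by
    rw [Filter.EventuallyEq.differentiableAt_iff hderiv_eq]
    exact h2.differentiableAt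
  have hval : deriv (deriv g) 0 = fderiv ℝ (fderiv ℝ u) x y y := by
    rw [hderiv_eq.deriv_eq]
    exact h2.deriv
  rw [← hval]
  exact deriv2_nonpos_of_isLocalMax hgc hd2 hgmax

variable {n : ℕ} {α : ℝ}

local notation "q" => fun y : Euc n => (inner ℝ y y : ℝ)

lemma hasFDerivAt_q (y : Euc n) :
    HasFDerivAt (fun z : Euc n => (inner ℝ z z : ℝ)) ((2:ℝ) • (innerSL ℝ y : Euc n →L[ℝ] ℝ)) y := by
  have h := (hasFDerivAt_id (𝕜 := ℝ) y).inner ℝ (hasFDerivAt_id y)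
  refine h.congr_fderiv ?_
  ext v
  simp only [ContinuousLinearMap.smul_apply, innerSL_apply_apply, ContinuousLinearMap.comp_apply,
    ContinuousLinearMap.prod_apply, ContinuousLinearMap.id_apply, fderivInnerCLM_apply, id]
  rw [real_inner_comm v y]
  simp only [two_smul, smul_eq_mul]
  ring

lemma q_pos {y : Euc n} (hy : y ≠ 0) : 0 < (inner ℝ y y : ℝ) := by
  rw [real_inner_self_eq_norm_sq]
  exact pow_pos (norm_pos_iff.mpr hy) 2

lemma q_eq_norm_sq (y : Euc n) : (inner ℝ y y : ℝ) = ‖y‖ ^ (2:ℕ) :=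
  real_inner_self_eq_norm_sq y

lemma weq : (fun y : Euc n => ‖y‖ ^ (-α)) = (fun y => ((inner ℝ y y : ℝ)) ^ (-α/2)) := by
  funext y
  rw [q_eq_norm_sq, ← Real.rpow_natCast ‖y‖ 2, ← Real.rpow_mul (norm_nonneg y)]
  push_cast
  rw [show ((2:ℝ) * (-α/2)) = -α by ring]

lemma q_rpow_eq (y : Euc n) (p : ℝ) : ((inner ℝ y y : ℝ)) ^ p = ‖y‖ ^ (2 * p) := by
  rw [q_eq_norm_sq, ← Real.rpow_natCast ‖y‖ 2, ← Real.rpow_mul (norm_nonneg y)]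
  push_cast
  ring_nf

lemma contDiffAt_w {x : Euc n} (hx : x ≠ 0) : ContDiffAt ℝ 2 (fun y : Euc n => ‖y‖ ^ (-α)) x := by
  rw [weq]
  have hq : ContDiff ℝ 2 (fun z : Euc n => (inner ℝ z z : ℝ)) := contDiff_id.inner ℝ contDiff_id
  have h2 : ContDiffAt ℝ 2 (fun t : ℝ => t ^ (-α/2)) ((inner ℝ x x : ℝ)) :=
    Real.contDiffAt_rpow_const_of_ne (ne_of_gt (q_pos hx))
  exact ContDiffAt.comp (g := fun t : ℝ => t ^ (-α/2)) (f := fun z : Euc n => (inner ℝ z z : ℝ)) x h2 hq.contDiffAt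

lemma hasFDerivAt_w {y : Euc n} (hy : y ≠ 0) :
    HasFDerivAt (fun z : Euc n => ‖z‖ ^ (-α))
      ((-α * ((inner ℝ y y : ℝ)) ^ (-α/2-1)) • (innerSL ℝ y : Euc n →L[ℝ] ℝ)) y := by
  rw [weq]
  have hφ : HasDerivAt (fun t : ℝ => t ^ (-α/2)) ((-α/2) * ((inner ℝ y y : ℝ)) ^ (-α/2-1))
      ((inner ℝ y y : ℝ)) := Real.hasDerivAt_rpow_const (Or.inl (ne_of_gt (q_pos hy)))
  have := HasDerivAt.comp_hasFDerivAt (h₂ := fun t : ℝ => t ^ (-α/2)) (f := fun z : Euc n => (inner ℝ z z : ℝ)) y hφ (hasFDerivAt_q y)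
  refine this.congr_fderiv ?_
  rw [smul_smul]
  congr 1
  ring

lemma pd2_w_formula {x : Euc n} (hx : x ≠ 0) (i j : Fin n) :
    pd2 n i j (fun y => ‖y‖ ^ (-α)) x =
      (α*(α+2) * ((inner ℝ x x : ℝ)) ^ (-α/2-2)) * (x i * x j)
        - (α * ((inner ℝ x x : ℝ)) ^ (-α/2-1)) * (if i = j then 1 else 0) := by
  have hev : ∀ᶠ y in 𝓝 x, y ≠ (0 : Euc n) := eventually_ne_nhds hx
  -- the first-derivative function applied to e_j agrees with F j near x
  have heq : (fun y => fderiv ℝ (fun z : Euc n => ‖z‖ ^ (-α)) y (EuclideanSpace.single j 1))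
      =ᶠ[𝓝 x] fun y => (-α * ((inner ℝ y y : ℝ)) ^ (-α/2-1)) * (y j) := by
    filter_upwards [hev] with y hy
    rw [(hasFDerivAt_w hy).fderiv]
    simp [EuclideanSpace.inner_single_right]
  rw [pd2, heq.fderiv_eq]
  -- now differentiate F j
  have hpow : HasDerivAt (fun t : ℝ => t ^ (-α/2-1)) ((-α/2-1) * ((inner ℝ x x : ℝ)) ^ (-α/2-1-1))
      ((inner ℝ x x : ℝ)) := Real.hasDerivAt_rpow_const (Or.inl (ne_of_gt (q_pos hx)))
  have hc : HasFDerivAt (fun y : Euc n => -α * ((inner ℝ y y : ℝ)) ^ (-α/2-1))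
      ((-α) • (((-α/2-1) * ((inner ℝ x x : ℝ)) ^ (-α/2-1-1)) • ((2:ℝ) • (innerSL ℝ x : Euc n →L[ℝ] ℝ)))) x :=
    (HasDerivAt.comp_hasFDerivAt (h₂ := fun t : ℝ => t ^ (-α/2-1)) (f := fun z : Euc n => (inner ℝ z z : ℝ)) x hpow (hasFDerivAt_q x)).const_mul (-α)
  have hd : HasFDerivAt (fun y : Euc n => y j) (EuclideanSpace.proj j : Euc n →L[ℝ] ℝ) x :=
    (EuclideanSpace.proj j : Euc n →L[ℝ] ℝ).hasFDerivAt
  have hmul := hc.mul hd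
  rw [show (fun y : Euc n => -α * ((inner ℝ y y : ℝ)) ^ (-α/2-1) * y j) = (fun y : Euc n => -α * ((inner ℝ y y : ℝ)) ^ (-α/2-1)) * (fun y : Euc n => y j) from rfl, hmul.fderiv]
  simp [EuclideanSpace.inner_single_right, EuclideanSpace.single_apply]
  rcases eq_or_ne i j with h | h
  · subst h
    simp
    rw [show (-α/2-1-1 : ℝ) = -α/2-2 by ring]
    ring
  · simp [h, Ne.symm h]
    rw [show (-α/2-1-1 : ℝ) = -α/2-2 by ring]
    ring

lemma pd2_w_quad (hα : 0 < α) {x : Euc n} (hx : x ≠ 0) {r₀ : ℝ} (hr₀ : 0 < r₀)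
    (hr : r₀ ≤ ‖x‖) (v : Fin n → ℝ) :
    -((α * r₀ ^ (-(α+2))) * (∑ i, v i * v i))
      ≤ ∑ i, ∑ j, v i * v j * pd2 n i j (fun y => ‖y‖ ^ (-α)) x := by
  have hQ : (0:ℝ) < (inner ℝ x x : ℝ) := q_pos hx
  set C : ℝ := α*(α+2) * ((inner ℝ x x : ℝ)) ^ (-α/2-2) with hC
  set D : ℝ := α * ((inner ℝ x x : ℝ)) ^ (-α/2-1) with hD
  have hsum : ∑ i, ∑ j, v i * v j * pd2 n i j (fun y => ‖y‖ ^ (-α)) x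
      = C * (∑ i, v i * x i) ^ 2 - D * (∑ i, v i * v i) := by
    have : ∀ i j : Fin n, v i * v j * pd2 n i j (fun y => ‖y‖ ^ (-α)) x
        = C * ((v i * x i) * (v j * x j)) - v i * v j * (D * (if i = j then 1 else 0)) := by
      intro i j
      rw [pd2_w_formula hx i j]
      ring
    simp only [this, Finset.sum_sub_distrib]
    congr 1
    · rw [sq, Finset.sum_mul_sum]
      rw [Finset.mul_sum]
      refine Finset.sum_congr rfl fun i _ => ?_
      rw [Finset.mul_sum]
    · rw [Finset.mul_sum]
      refine Finset.sum_congr rfl fun i _ => ?_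
      simp [Finset.mul_sum, mul_ite]
      ring
  rw [hsum]
  have hCpos : 0 ≤ C * (∑ i, v i * x i) ^ 2 := by
    apply mul_nonneg _ (sq_nonneg _)
    have : (0:ℝ) ≤ ((inner ℝ x x : ℝ)) ^ (-α/2-2) := Real.rpow_nonneg (le_of_lt hQ) _
    positivity
  have hDle : D ≤ α * r₀ ^ (-(α+2)) := by
    rw [hD, q_rpow_eq x (-α/2-1), show (2 * (-α/2-1) : ℝ) = -(α+2) by ring]
    apply mul_le_mul_of_nonneg_left _ (le_of_lt hα)
    rw [Real.rpow_neg (le_of_lt hr₀), Real.rpow_neg (norm_nonneg x)]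
    apply inv_anti₀ (Real.rpow_pos_of_pos hr₀ _)
    exact Real.rpow_le_rpow (le_of_lt hr₀) hr (by positivity)
  have hvv : 0 ≤ ∑ i, v i * v i := Finset.sum_nonneg fun i _ => mul_self_nonneg _
  nlinarith [mul_le_mul_of_nonneg_right hDle hvv]

variable {n : ℕ}

-- column quadratic form identity: (star U * X * U) i i = u ⬝ᵥ X *ᵥ u  where u = column i of U
lemma conj_diag_eq {U X : Matrix (Fin n) (Fin n) ℝ} (i : Fin n) :
    (star U * X * U) i i = (fun k => U k i) ⬝ᵥ (X *ᵥ fun k => U k i) := by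
  simp only [Matrix.mul_apply, Matrix.star_apply, star_trivial, dotProduct,
    Matrix.mulVec, dotProduct]
  simp only [Finset.sum_mul, Finset.mul_sum]
  rw [Finset.sum_comm]
  refine Finset.sum_congr rfl fun k _ => ?_
  refine Finset.sum_congr rfl fun l _ => ?_
  ring

lemma psd_quad {M : Matrix (Fin n) (Fin n) ℝ} (hM : M.PosSemidef) (v : Fin n → ℝ) :
    0 ≤ v ⬝ᵥ M *ᵥ v := by
  have := hM.dotProduct_mulVec_nonneg v
  simpa using this

lemma quad_one (v : Fin n → ℝ) : v ⬝ᵥ (1 : Matrix (Fin n) (Fin n) ℝ) *ᵥ v = v ⬝ᵥ v := by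
  rw [Matrix.one_mulVec]

lemma trace_mul_diag (M : Matrix (Fin n) (Fin n) ℝ) (d : Fin n → ℝ) :
    (M * Matrix.diagonal d).trace = ∑ i, M i i * d i := by
  rw [Matrix.trace]
  refine Finset.sum_congr rfl fun i _ => ?_
  rw [Matrix.diag_apply, Matrix.mul_apply]
  simp [Matrix.diagonal_apply, mul_ite, mul_zero, Finset.sum_ite_eq]

lemma quad_upper (hn : 2 ≤ n) {S A : Matrix (Fin n) (Fin n) ℝ} {CE c : ℝ}
    (hCE : 1 ≤ CE) (hc : 0 ≤ c) (hS : S.IsHermitian)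
    (hlow : ∀ v : Fin n → ℝ, -(c * (v ⬝ᵥ v)) ≤ v ⬝ᵥ S *ᵥ v)
    (hA1 : (A - (1/CE) • (1 : Matrix (Fin n) (Fin n) ℝ)).PosSemidef)
    (hA2 : ((CE:ℝ) • (1 : Matrix (Fin n) (Fin n) ℝ) - A).PosSemidef)
    (htr : (A * S).trace ≤ 2 * CE) :
    ∀ v : Fin n → ℝ, v ⬝ᵥ S *ᵥ v ≤ (CE^2 * (((n:ℝ)-1)*c + 2)) * (v ⬝ᵥ v) := by
  have hCE0 : (0:ℝ) < CE := lt_of_lt_of_le one_pos hCE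
  set U : Matrix (Fin n) (Fin n) ℝ := (hS.eigenvectorUnitary : Matrix (Fin n) (Fin n) ℝ) with hU
  set μ : Fin n → ℝ := hS.eigenvalues with hμ
  have hspec : S = U * Matrix.diagonal μ * star U := by
    have := hS.spectral_theorem
    simpa using this
  have hUs : star U * U = 1 := by
    exact Matrix.UnitaryGroup.star_mul_self hS.eigenvectorUnitary
  have hUs' : U * star U = 1 := by
    exact Unitary.mul_star_self_of_mem (hS.eigenvectorUnitary).2
  -- columns
  set u : Fin n → Fin n → ℝ := fun i k => U k i with hu
  have hnorm : ∀ i, u i ⬝ᵥ u i = 1 := by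
    intro i
    have h1 : (star U * U) i i = (1 : Matrix (Fin n) (Fin n) ℝ) i i := by rw [hUs]
    have h2 := conj_diag_eq (U := U) (X := (1 : Matrix (Fin n) (Fin n) ℝ)) i
    rw [Matrix.mul_one (star U), hUs, Matrix.one_mulVec] at h2
    rw [← h2, Matrix.one_apply_eq]
  have hSU : star U * S * U = Matrix.diagonal μ := by
    rw [hspec, show star U * (U * Matrix.diagonal μ * star U) * U
        = (star U * U) * Matrix.diagonal μ * (star U * U) by noncomm_ring, hUs]
    simp
  have hμq : ∀ i, μ i = u i ⬝ᵥ S *ᵥ u i := by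
    intro i
    have := conj_diag_eq (U := U) (X := S) i
    rw [hSU] at this
    simpa [Matrix.diagonal_apply_eq] using this
  have hμlow : ∀ i, -c ≤ μ i := by
    intro i
    have := hlow (u i)
    rw [hnorm i, mul_one] at this
    rw [hμq i]
    exact this
  set qA : Fin n → ℝ := fun i => u i ⬝ᵥ A *ᵥ u i with hqA
  have hqA1 : ∀ i, 1/CE ≤ qA i := by
    intro i
    have h := psd_quad hA1 (u i)
    rw [Matrix.sub_mulVec, dotProduct_sub, Matrix.smul_mulVec,
      Matrix.one_mulVec, dotProduct_smul, hnorm i] at h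
    simp only [smul_eq_mul, mul_one] at h
    linarith
  have hqA2 : ∀ i, qA i ≤ CE := by
    intro i
    have h := psd_quad hA2 (u i)
    rw [Matrix.sub_mulVec, dotProduct_sub, Matrix.smul_mulVec,
      Matrix.one_mulVec, dotProduct_smul, hnorm i] at h
    simp only [smul_eq_mul, mul_one] at h
    linarith
  -- trace identity
  have htr2 : (A * S).trace = ∑ i, μ i * qA i := by
    have h1 : A * S = (A * U * Matrix.diagonal μ) * star U := by
      rw [hspec]; noncomm_ring
    rw [h1, Matrix.trace_mul_comm, show star U * (A * U * Matrix.diagonal μ)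
        = (star U * A * U) * Matrix.diagonal μ by noncomm_ring, trace_mul_diag]
    refine Finset.sum_congr rfl fun i _ => ?_
    rw [conj_diag_eq i]
    simp only [hqA]
    ring
  set K : ℝ := CE^2 * (((n:ℝ)-1)*c + 2) with hK
  have hn1 : (1:ℝ) ≤ (n:ℝ) - 1 := by
    have : (2:ℝ) ≤ (n:ℝ) := by exact_mod_cast hn
    linarith
  have hterm : ∀ i, -(c*CE) ≤ μ i * qA i := by
    intro i
    have hqA0 : (0:ℝ) ≤ qA i := le_trans (le_of_lt (one_div_pos.mpr hCE0)) (hqA1 i)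
    nlinarith [hμlow i, hqA1 i, hqA2 i, mul_nonneg (by linarith [hμlow i] : (0:ℝ) ≤ μ i + c) hqA0]
  have hμK : ∀ i, μ i ≤ K := by
    intro i₀
    have hsum : μ i₀ * qA i₀ + ∑ i ∈ Finset.univ.erase i₀, μ i * qA i = ∑ i, μ i * qA i :=
      Finset.add_sum_erase Finset.univ (fun i => μ i * qA i) (Finset.mem_univ i₀)
    have herase : (((n:ℝ)-1)) * (-(c*CE)) ≤ ∑ i ∈ Finset.univ.erase i₀, μ i * qA i := by
      have hcard : (Finset.univ.erase i₀).card = n - 1 := by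
        rw [Finset.card_erase_of_mem (Finset.mem_univ i₀), Finset.card_univ, Fintype.card_fin]
      calc (((n:ℝ)-1)) * (-(c*CE)) = ∑ _i ∈ Finset.univ.erase i₀, (-(c*CE)) := by
            rw [Finset.sum_const, hcard, nsmul_eq_mul]
            congr 1
            rw [Nat.cast_sub (by omega)]
            norm_num
        _ ≤ _ := Finset.sum_le_sum fun i _ => hterm i
    have hiq : μ i₀ * qA i₀ ≤ 2*CE + ((n:ℝ)-1)*(c*CE) := by
      have := htr
      rw [htr2, ← hsum] at this
      linarith
    rcases le_or_gt (μ i₀) 0 with h | h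
    · have : (0:ℝ) ≤ K := by
        rw [hK]
        nlinarith [mul_nonneg (by linarith : (0:ℝ) ≤ (n:ℝ)-1) hc]
      linarith
    · have h1 : (1:ℝ) ≤ CE * qA i₀ := by
        have := hqA1 i₀
        calc (1:ℝ) = CE * (1/CE) := by field_simp
          _ ≤ CE * qA i₀ := by nlinarith
      have h2 : μ i₀ ≤ CE * (μ i₀ * qA i₀) := by nlinarith
      calc μ i₀ ≤ CE * (μ i₀ * qA i₀) := h2
        _ ≤ CE * (2*CE + ((n:ℝ)-1)*(c*CE)) := by nlinarith
        _ = K := by rw [hK]; ring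
  -- final quadratic bound
  intro v
  set z : Fin n → ℝ := star U *ᵥ v with hz
  have hflip : ∀ (X : Matrix (Fin n) (Fin n) ℝ) (a b : Fin n → ℝ),
      a ⬝ᵥ (X *ᵥ b) = (star X *ᵥ a) ⬝ᵥ b := by
    intro X a b
    simp only [dotProduct, Matrix.mulVec, dotProduct, Matrix.star_apply,
      star_trivial, Finset.mul_sum, Finset.sum_mul]
    rw [Finset.sum_comm]
    exact Finset.sum_congr rfl fun i _ => Finset.sum_congr rfl fun j _ => by ring
  have hvSv : v ⬝ᵥ S *ᵥ v = ∑ i, μ i * (z i)^2 := by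
    rw [hspec, ← Matrix.mulVec_mulVec, ← Matrix.mulVec_mulVec, hflip, ← hz]
    simp only [dotProduct, Matrix.mulVec_diagonal]
    exact Finset.sum_congr rfl fun i _ => by ring
  have hvv : v ⬝ᵥ v = ∑ i, (z i)^2 := by
    have h0 : v ⬝ᵥ (U *ᵥ z) = z ⬝ᵥ z := by
      have h := hflip U v z
      rw [← hz] at h
      exact h
    conv at h0 => lhs; rw [hz, Matrix.mulVec_mulVec, hUs', Matrix.one_mulVec]
    rw [h0]
    exact Finset.sum_congr rfl fun i _ => by rw [sq]
  rw [hvSv, hvv, Finset.mul_sum]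
  refine Finset.sum_le_sum fun i _ => ?_
  have := hμK i
  nlinarith [sq_nonneg (z i)]

lemma single_quad (S : Matrix (Fin n) (Fin n) ℝ) (i j : Fin n) :
    (Pi.single i 1 : Fin n → ℝ) ⬝ᵥ S *ᵥ (Pi.single j 1 : Fin n → ℝ) = S i j := by
  rw [Matrix.mulVec_single, single_dotProduct]
  simp

lemma entry_bound {S : Matrix (Fin n) (Fin n) ℝ} (hS : S.IsHermitian) {b B : ℝ}
    (hb : 0 ≤ b) (hB : 0 ≤ B)
    (hlow : ∀ v : Fin n → ℝ, -(b * (v ⬝ᵥ v)) ≤ v ⬝ᵥ S *ᵥ v)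
    (hupp : ∀ v : Fin n → ℝ, v ⬝ᵥ S *ᵥ v ≤ B * (v ⬝ᵥ v)) (i j : Fin n) :
    |S i j| ≤ max b B := by
  have hsymm : S j i = S i j := by
    have := congrFun (congrFun hS j) i
    simpa [Matrix.conjTranspose_apply] using this.symm
  have hbmax : b ≤ max b B := le_max_left _ _
  have hBmax : B ≤ max b B := le_max_right _ _
  rcases eq_or_ne i j with h | h
  · subst h
    have h1 := hlow (Pi.single i 1)
    have h2 := hupp (Pi.single i 1)
    have hd : (Pi.single i 1 : Fin n → ℝ) ⬝ᵥ (Pi.single i 1 : Fin n → ℝ) = 1 := by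
      rw [single_dotProduct]; simp
    rw [single_quad, hd] at h1 h2
    rw [abs_le]
    constructor <;> nlinarith
  · set v : Fin n → ℝ := Pi.single i 1 + Pi.single j 1 with hv
    set v' : Fin n → ℝ := Pi.single i 1 - Pi.single j 1 with hv'
    have hdd : ∀ (k l : Fin n), (Pi.single k 1 : Fin n → ℝ) ⬝ᵥ (Pi.single l 1 : Fin n → ℝ)
        = if k = l then 1 else 0 := by
      intro k l
      rw [single_dotProduct]
      simp [Pi.single_apply]
    have hqv : v ⬝ᵥ S *ᵥ v = S i i + S j j + 2 * S i j := by
      rw [hv]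
      rw [add_dotProduct, Matrix.mulVec_add, dotProduct_add, dotProduct_add]
      rw [single_quad, single_quad, single_quad, single_quad, hsymm]
      ring
    have hqv' : v' ⬝ᵥ S *ᵥ v' = S i i + S j j - 2 * S i j := by
      rw [hv']
      rw [sub_dotProduct, Matrix.mulVec_sub, dotProduct_sub, dotProduct_sub]
      rw [single_quad, single_quad, single_quad, single_quad, hsymm]
      ring
    have hvv : v ⬝ᵥ v = 2 := by
      rw [hv, add_dotProduct, dotProduct_add, dotProduct_add]
      rw [hdd, hdd, hdd, hdd]
      simp [h, Ne.symm h]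
      norm_num
    have hvv' : v' ⬝ᵥ v' = 2 := by
      rw [hv', sub_dotProduct, dotProduct_sub, dotProduct_sub]
      rw [hdd, hdd, hdd, hdd]
      simp [h, Ne.symm h]
      norm_num
    have h1 := hupp v
    have h2 := hlow v'
    have h3 := hupp v'
    have h4 := hlow v
    rw [hqv, hvv] at h1 h4
    rw [hqv', hvv'] at h2 h3
    rw [abs_le]
    constructor <;> linarith

lemma fderiv2_combo {n : ℕ} {φ₀ φ₁ w : Euc n → ℝ} {x : Euc n} (h0 : ContDiffAt ℝ 2 φ₀ x)
    (h1 : ContDiffAt ℝ 2 φ₁ x) (hw : ContDiffAt ℝ 2 w x) (δ : ℝ) :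
    fderiv ℝ (fderiv ℝ (fun y => (φ₁ y - φ₀ y) + δ * w y)) x
      = fderiv ℝ (fderiv ℝ φ₁) x - fderiv ℝ (fderiv ℝ φ₀) x + δ • fderiv ℝ (fderiv ℝ w) x := by
  have hev : (fun y => fderiv ℝ (fun z => (φ₁ z - φ₀ z) + δ * w z) y)
      =ᶠ[𝓝 x] fun y => fderiv ℝ φ₁ y - fderiv ℝ φ₀ y + δ • fderiv ℝ w y := by
    filter_upwards [h0.eventually (by norm_num), h1.eventually (by norm_num),
      hw.eventually (by norm_num)] with y hy0 hy1 hyw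
    have d0 : DifferentiableAt ℝ φ₀ y := hy0.differentiableAt (by norm_num)
    have d1 : DifferentiableAt ℝ φ₁ y := hy1.differentiableAt (by norm_num)
    have dw : DifferentiableAt ℝ w y := hyw.differentiableAt (by norm_num)
    rw [show (fun z => (φ₁ z - φ₀ z) + δ * w z) = (φ₁ - φ₀) + (fun z => δ * w z) from rfl, fderiv_add (d1.sub d0) (dw.const_mul δ), fderiv_sub d1 d0, fderiv_const_mul dw δ]
  rw [hev.fderiv_eq]
  rw [show (fun y => fderiv ℝ φ₁ y - fderiv ℝ φ₀ y + δ • fderiv ℝ w y) = (fderiv ℝ φ₁ - fderiv ℝ φ₀) + δ • fderiv ℝ w from rfl, fderiv_add ((diffAt_fderiv h1).sub (diffAt_fderiv h0)) ((diffAt_fderiv hw).const_smul δ),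
    fderiv_sub (diffAt_fderiv h1) (diffAt_fderiv h0), fderiv_const_smul (diffAt_fderiv hw) δ]

lemma hessM_isHermitian {n : ℕ} {u : Euc n → ℝ} {x : Euc n} (hu : ContDiffAt ℝ 2 u x) :
    (hessM n u x).IsHermitian := by
  have hev : ∀ᶠ y in 𝓝 x, HasFDerivAt u (fderiv ℝ u y) y := by
    filter_upwards [hu.eventually (by norm_num)] with y hy
    exact (hy.differentiableAt (by norm_num)).hasFDerivAt
  have hB : HasFDerivAt (fderiv ℝ u) (fderiv ℝ (fderiv ℝ u) x) x :=
    (diffAt_fderiv hu).hasFDerivAt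
  have hsym := second_derivative_symmetric_of_eventually hev hB
  ext i j
  rw [Matrix.conjTranspose_apply]
  simp only [hessM, Matrix.of_apply, star_trivial]
  rw [pd2_eq_fderiv2 hu, pd2_eq_fderiv2 hu]
  exact hsym _ _

lemma dot_hessM {n : ℕ} (u : Euc n → ℝ) (x : Euc n) (v : Fin n → ℝ) :
    v ⬝ᵥ (hessM n u x) *ᵥ v = ∑ i, ∑ j, v i * v j * pd2 n i j u x := by
  simp only [dotProduct, Matrix.mulVec, dotProduct, hessM, Matrix.of_apply,
    Finset.mul_sum]
  exact Finset.sum_congr rfl fun i _ => Finset.sum_congr rfl fun j _ => by ring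

lemma quad_eq_fderiv2 {n : ℕ} {u : Euc n → ℝ} {x : Euc n} (hu : ContDiffAt ℝ 2 u x)
    (v : Fin n → ℝ) :
    ∑ i, ∑ j, v i * v j * pd2 n i j u x
      = fderiv ℝ (fderiv ℝ u) x (vecE v) (vecE v) := by
  rw [fderiv2_vecE]
  exact Finset.sum_congr rfl fun i _ => Finset.sum_congr rfl fun j _ => by
    rw [pd2_eq_fderiv2 hu]

end Aux

/-- Lemma 2.11: Hessian bounds at the maximum point of `(φ₁ - φ₀) + δw`. -/
theorem hessian_bounds_at_max
    (n : ℕ) (hn : 2 ≤ n) (CE CS : ℝ) (hCE : 1 ≤ CE) (hCS : 0 < CS)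
    (r₀ r₁ : ℝ) (hr₀ : 0 < r₀) (hr₁ : 0 < r₁) (hr₁r₀ : r₁ ≤ r₀) (h3r₀ : 3 * r₀ ≤ 1)
    (x₁ : Euc n) (hx₁ : ‖x₁‖ = 2 * r₀)
    (α δ : ℝ) (hα : 0 < α) (hδ : 0 < δ)
    (w : Euc n → ℝ) (hw : ∀ x, w x = ‖x‖ ^ (-α))
    (xst : Euc n) (hxst : xst ∈ Metric.ball x₁ r₁)
    (φ₀ φ₁ : Euc n → ℝ) (hφ₀ : ContDiffAt ℝ 2 φ₀ xst) (hφ₁ : ContDiffAt ℝ 2 φ₁ xst)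
    (hmax : IsLocalMax (fun x => (φ₁ x - φ₀ x) + δ * w x) xst)
    (hhess₁ : (hessM n φ₁ xst + CS • (1 : Matrix (Fin n) (Fin n) ℝ)).PosSemidef)
    (hA : ∃ A : Matrix (Fin n) (Fin n) ℝ, A.IsSymm ∧
      (A - (1 / CE) • (1 : Matrix (Fin n) (Fin n) ℝ)).PosSemidef ∧
      (CE • (1 : Matrix (Fin n) (Fin n) ℝ) - A).PosSemidef ∧
      (A * hessM n φ₀ xst).trace ≤ 2 * CE) :
    hessMax n φ₀ xst + hessMax n φ₁ xst ≤
      2 * (CE ^ 2 * (((n : ℝ) - 1) * (CS + δ * α * r₀ ^ (-(α + 2))) + 2)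
        + δ * α * r₀ ^ (-(α + 2))) :=  by
  classical
  haveI : Nonempty (Fin n) := ⟨⟨0, by omega⟩⟩
  -- geometry: r₀ ≤ ‖xst‖, xst ≠ 0
  have hdist : ‖xst - x₁‖ < r₁ := by
    simpa [dist_eq_norm] using Metric.mem_ball.mp hxst
  have hxstnorm : r₀ ≤ ‖xst‖ := by
    have h1 : ‖x₁‖ - ‖xst‖ ≤ ‖x₁ - xst‖ := norm_sub_norm_le _ _
    have h2 : ‖x₁ - xst‖ = ‖xst - x₁‖ := norm_sub_rev _ _
    rw [hx₁] at h1
    linarith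
  have hxne : xst ≠ 0 := by
    intro h
    rw [h, norm_zero] at hxstnorm
    linarith
  have hwf : w = fun x : Euc n => ‖x‖ ^ (-α) := funext hw
  subst hwf
  obtain ⟨a, ha⟩ : ∃ x : ℝ, x = α * r₀ ^ (-(α+2)) := ⟨_, rfl⟩
  obtain ⟨c, hc⟩ : ∃ x : ℝ, x = CS + δ * a := ⟨_, rfl⟩
  obtain ⟨K, hK⟩ : ∃ x : ℝ, x = CE^2 * (((n:ℝ)-1)*c + 2) := ⟨_, rfl⟩
  have ha0 : 0 ≤ a := by rw [ha]; positivity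
  have hδa0 : 0 ≤ δ * a := mul_nonneg hδ.le ha0
  have hc0 : 0 ≤ c := by rw [hc]; linarith [hCS.le]
  have hn1 : (1:ℝ) ≤ (n:ℝ) - 1 := by
    have : (2:ℝ) ≤ (n:ℝ) := by exact_mod_cast hn
    linarith
  -- smoothness of w at xst
  have hwC : ContDiffAt ℝ 2 (fun y : Euc n => ‖y‖ ^ (-α)) xst := contDiffAt_w hxne
  -- quadratic form bound for w
  have hwquad : ∀ v : Fin n → ℝ,
      -(a * (v ⬝ᵥ v)) ≤ ∑ i, ∑ j, v i * v j * pd2 n i j (fun y => ‖y‖ ^ (-α)) xst := by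
    intro v
    have h := pd2_w_quad hα hxne hr₀ hxstnorm v
    rw [← ha] at h
    exact h
  -- second-derivative test at the local maximum
  have hfC : ContDiffAt ℝ 2 (fun x : Euc n => (φ₁ x - φ₀ x) + δ * ‖x‖ ^ (-α)) xst :=
    (hφ₁.sub hφ₀).add (contDiffAt_const.mul hwC)
  have hcombo := fderiv2_combo hφ₀ hφ₁ hwC δ
  have hquadf : ∀ v : Fin n → ℝ,
      (∑ i, ∑ j, v i * v j * pd2 n i j φ₁ xst) - (∑ i, ∑ j, v i * v j * pd2 n i j φ₀ xst)
        + δ * (∑ i, ∑ j, v i * v j * pd2 n i j (fun y => ‖y‖ ^ (-α)) xst) ≤ 0 := by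
    intro v
    have hle := fderiv2_nonpos_of_isLocalMax hfC hmax (vecE v)
    rw [hcombo] at hle
    rw [quad_eq_fderiv2 hφ₁ v, quad_eq_fderiv2 hφ₀ v, quad_eq_fderiv2 hwC v]
    simpa [ContinuousLinearMap.sub_apply, ContinuousLinearMap.add_apply,
      ContinuousLinearMap.smul_apply, smul_eq_mul] using hle
  -- lower bound for Hessian of φ₁
  have hS1low : ∀ v : Fin n → ℝ, -(CS * (v ⬝ᵥ v)) ≤ v ⬝ᵥ (hessM n φ₁ xst) *ᵥ v := by
    intro v
    have h := psd_quad hhess₁ v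
    rw [Matrix.add_mulVec, dotProduct_add, Matrix.smul_mulVec, Matrix.one_mulVec,
      dotProduct_smul] at h
    simp only [smul_eq_mul] at h
    linarith
  -- lower bound for Hessian of φ₀
  have hS0low : ∀ v : Fin n → ℝ, -(c * (v ⬝ᵥ v)) ≤ v ⬝ᵥ (hessM n φ₀ xst) *ᵥ v := by
    intro v
    have h1 := hquadf v
    have h2 := hS1low v
    have h3 := hwquad v
    rw [dot_hessM] at h2 ⊢
    have h4 := mul_le_mul_of_nonneg_left h3 hδ.le
    rw [mul_neg] at h4
    have hexp : c * (v ⬝ᵥ v) = CS * (v ⬝ᵥ v) + δ * (a * (v ⬝ᵥ v)) := by rw [hc]; ring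
    linarith
  have hH0 := hessM_isHermitian hφ₀ (x := xst)
  have hH1 := hessM_isHermitian hφ₁ (x := xst)
  obtain ⟨A, hAsymm, hA1, hA2, htrA⟩ := hA
  have hupp0 := quad_upper hn hCE hc0 hH0 hS0low hA1 hA2 htrA
  simp only [← hK] at hupp0
  -- upper bound for Hessian of φ₁
  have hupp1 : ∀ v : Fin n → ℝ, v ⬝ᵥ (hessM n φ₁ xst) *ᵥ v ≤ (K + δ * a) * (v ⬝ᵥ v) := by
    intro v
    have h1 := hquadf v
    have h3 := hwquad v
    have h0 := hupp0 v
    rw [dot_hessM] at h0 ⊢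
    have h4 := mul_le_mul_of_nonneg_left h3 hδ.le
    rw [mul_neg] at h4
    have hexp : (K + δ * a) * (v ⬝ᵥ v) = K * (v ⬝ᵥ v) + δ * (a * (v ⬝ᵥ v)) := by ring
    linarith
  -- c ≤ K
  have hCE2 : (1:ℝ) ≤ CE^2 := by nlinarith
  have hcK : c ≤ K := by
    rw [hK]
    nlinarith [mul_le_mul_of_nonneg_right hCE2
        (by nlinarith [mul_nonneg (by linarith : (0:ℝ) ≤ (n:ℝ)-1) hc0] : (0:ℝ) ≤ ((n:ℝ)-1)*c + 2),
      mul_le_mul_of_nonneg_right hn1 hc0]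
  have hK0 : 0 ≤ K := le_trans hc0 hcK
  -- entry bounds
  have hb0 : ∀ i j : Fin n, |pd2 n i j φ₀ xst| ≤ K := by
    intro i j
    have h := entry_bound hH0 hc0 hK0 hS0low hupp0 i j
    rw [max_eq_right hcK] at h
    simpa [hessM] using h
  have hb1 : ∀ i j : Fin n, |pd2 n i j φ₁ xst| ≤ K + δ * a := by
    intro i j
    have hCSle : CS ≤ K + δ * a := by
      have : CS ≤ c := by rw [hc]; linarith
      linarith
    have h := entry_bound hH1 hCS.le (by linarith : (0:ℝ) ≤ K + δ * a) hS1low hupp1 i j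
    rw [max_eq_right hCSle] at h
    simpa [hessM] using h
  have hmax0 : hessMax n φ₀ xst ≤ K := ciSup_le fun i => ciSup_le fun j => hb0 i j
  have hmax1 : hessMax n φ₁ xst ≤ K + δ * a := ciSup_le fun i => ciSup_le fun j => hb1 i j
  have hfinal : hessMax n φ₀ xst + hessMax n φ₁ xst ≤ 2 * (K + δ * a) := by linarith
  calc hessMax n φ₀ xst + hessMax n φ₁ xst ≤ 2 * (K + δ * a) := hfinal
    _ = 2 * (CE ^ 2 * (((n : ℝ) - 1) * (CS + δ * α * r₀ ^ (-(α + 2))) + 2)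
        + δ * α * r₀ ^ (-(α + 2))) := by rw [hK, hc, ha]; ring

end
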